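/- For every b ∈ {0,1,…,n}, c_b = (1/(n+1)) · ∑_{t=0}^{n} C_t · e^{2πi t b/(n+1)}, where i = √−1 and C_t = ∏_{j=1}^n [1 + (α_j/β_j) + e^{−2πi t/(n+1)} · (α_j u_j/(β_j v_j))]. Consequently, if the mass function p sums to 1 over all legitimate extended states, then B = 1 / ( ∑_{b=0}^{g} ∑_{x=0}^{m−b} (ρ^x/x!) (∏_{r=0}^{x+b−1} θ(r)) c_b ) with g = min(m,n). -/

import Mathlib

/-- Activity state of a persistent user: Idle, Waiting, or Transmitting. -/
inductive Act : Type
  | I : Act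
  | W : Act
  | T : Act
deriving DecidableEq

instance : Fintype Act :=
  ⟨{Act.I, Act.W, Act.T}, fun x => by cases x <;> simp⟩

/-- Number of persistent users that are transmitting. -/
def busyP {n : ℕ} (a : Fin n → Act) : ℕ :=
  (Finset.univ.filter (fun j => a j = Act.T)).card

/-- The factor `(α/β)^{[a=W]} (αu/(βv))^{[a=T]}` contributed by one persistent user. -/
noncomputable def fac (α β u v : ℝ) : Act → ℝ
  | Act.I => 1
  | Act.W => α / β
  | Act.T => α * u / (β * v)

section Helpers
open Finset Complex


lemma multinomial_sum_helper (k xt : ℕ) (ρ : Fin k → ℝ) :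
    ∑ x ∈ Finset.Nat.antidiagonalTuple k xt, ∏ i, ρ i ^ (x i) / (x i).factorial =
    (∑ i, ρ i) ^ xt / xt.factorial := by
  rw [← Finset.piAntidiag_univ_fin_eq_antidiagonalTuple xt k,
    Finset.sum_pow_eq_sum_piAntidiag, Finset.sum_div]
  apply Finset.sum_congr rfl
  intro x hx
  have hsum : ∑ i, x i = xt := ((Finset.mem_piAntidiag).1 hx).1
  have hspec := Nat.multinomial_spec Finset.univ x
  rw [hsum] at hspec
  have hspecR : ((∏ i, (x i).factorial : ℕ) : ℝ) * (Nat.multinomial Finset.univ x : ℝ)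
      = (xt.factorial : ℝ) := by exact_mod_cast congrArg (Nat.cast (R := ℝ)) hspec
  have h1 : ((∏ i, (x i).factorial : ℕ) : ℝ) ≠ 0 := by
    positivity
  have h2 : ((xt.factorial : ℕ) : ℝ) ≠ 0 := by positivity
  rw [Finset.prod_div_distrib]
  push_cast at hspecR ⊢
  rw [div_eq_div_iff (by positivity) (by positivity), ← hspecR]
  ring

lemma root_sum_helper (n b d : ℕ) (hb : b ≤ n) (hd : d ≤ n) :
    ∑ t ∈ Finset.range (n+1),
      Complex.exp (2 * (Real.pi : ℂ) * Complex.I * ((b : ℂ) - (d : ℂ)) * t / (n+1)) =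
    if b = d then ((n : ℂ)+1) else 0 := by
  have hn1 : ((n : ℂ)+1) ≠ 0 := Nat.cast_add_one_ne_zero n
  set z := Complex.exp (2 * (Real.pi : ℂ) * Complex.I * ((b : ℂ) - (d : ℂ)) / (n+1)) with hz
  have hzt : ∀ t : ℕ,
      Complex.exp (2 * (Real.pi : ℂ) * Complex.I * ((b : ℂ) - (d : ℂ)) * t / (n+1)) = z ^ t := by
    intro t
    rw [← Complex.exp_nat_mul]
    congr 1
    ring
  simp_rw [hzt]
  by_cases hbd : b = d
  · subst hbd
    have hone : z = 1 := by
      rw [hz, sub_self, mul_zero, zero_div, Complex.exp_zero]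
    rw [if_pos rfl]
    simp only [hone, one_pow, Finset.sum_const, Finset.card_range, nsmul_eq_mul, mul_one]
    push_cast
    ring
  · rw [if_neg hbd]
    have hz1 : z ≠ 1 := by
      intro h
      rw [hz, Complex.exp_eq_one_iff] at h
      obtain ⟨j, hj⟩ := h
      have hπ : (Real.pi : ℂ) ≠ 0 := by exact_mod_cast Real.pi_ne_zero
      have hI : Complex.I ≠ 0 := Complex.I_ne_zero
      have key : ((b : ℂ) - (d : ℂ)) = (j : ℂ) * ((n : ℂ)+1) := by
        field_simp at hj
        have h2 : (2 * (Real.pi : ℂ) * Complex.I) ≠ 0 := by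
          simp [hπ, hI, Complex.ofReal_ne_zero]
        apply mul_left_cancel₀ h2
        linear_combination (2 * (Real.pi : ℂ) * Complex.I) * hj

      have keyZ : (b : ℤ) - (d : ℤ) = j * ((n : ℤ) + 1) := by
        exact_mod_cast key
      rcases lt_or_gt_of_ne hbd with h | h
      · have : j * ((n:ℤ)+1) < 0 := by omega
        have hj0 : j < 0 := by nlinarith [Int.natCast_nonneg n]
        have : j * ((n:ℤ)+1) ≤ -((n:ℤ)+1) := by nlinarith
        omega
      · have : 0 < j * ((n:ℤ)+1) := by omega
        have hj0 : 0 < j := by nlinarith [Int.natCast_nonneg n]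
        have : ((n:ℤ)+1) ≤ j * ((n:ℤ)+1) := by nlinarith
        omega
    have hzn : z ^ (n+1) = 1 := by
      rw [hz, ← Complex.exp_nat_mul]
      have harg : ((n+1 : ℕ) : ℂ) * (2 * (Real.pi : ℂ) * Complex.I * ((b : ℂ) - (d : ℂ)) / (n+1))
          = ((b : ℤ) - (d : ℤ) : ℂ) * (2 * (Real.pi : ℂ) * Complex.I) := by
        push_cast
        field_simp
      rw [harg]
      exact_mod_cast Complex.exp_int_mul_two_pi_mul_I ((b : ℤ) - (d : ℤ))
    rw [geom_sum_eq hz1, hzn]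
    simp

lemma act_sum {M : Type*} [AddCommMonoid M] (f : Act → M) :
    ∑ a : Act, f a = f Act.I + f Act.W + f Act.T := by
  rw [show (Finset.univ : Finset Act) = {Act.I, Act.W, Act.T} by decide]
  rw [Finset.sum_insert (by decide), Finset.sum_insert (by decide), Finset.sum_singleton]
  exact (add_assoc _ _ _).symm

lemma busyP_le {n : ℕ} (a : Fin n → Act) : busyP a ≤ n := by
  unfold busyP
  calc (Finset.univ.filter (fun j => a j = Act.T)).card ≤ (Finset.univ : Finset (Fin n)).card :=
        Finset.card_filter_le _ _
    _ = n := by simp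

lemma busyP_eq_sum {n : ℕ} (a : Fin n → Act) :
    busyP a = ∑ j, if a j = Act.T then 1 else 0 := by
  unfold busyP
  rw [Finset.card_filter]

lemma part1_helper (n : ℕ)
    (α β u v : Fin n → ℝ)
    (c : ℕ → ℝ)
    (hc : ∀ b, c b = ∑ a ∈ Finset.univ.filter (fun a : Fin n → Act => busyP a = b),
      ∏ j, fac (α j) (β j) (u j) (v j) (a j))
    (C : ℕ → ℂ)
    (hC : ∀ t, C t = ∏ j,
      (1 + ((α j / β j : ℝ) : ℂ) +
        Complex.exp (-2 * (Real.pi : ℂ) * Complex.I * t / (n + 1)) *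
          ((α j * u j / (β j * v j) : ℝ) : ℂ)))
    (b : ℕ) (hb : b ≤ n) :
    (c b : ℂ) = (1 / (n + 1)) * ∑ t ∈ Finset.range (n + 1),
        C t * Complex.exp (2 * (Real.pi : ℂ) * Complex.I * t * b / (n + 1)) := by
  have hn1 : ((n : ℂ) + 1) ≠ 0 := Nat.cast_add_one_ne_zero n
  set F : (Fin n → Act) → ℝ := fun a => ∏ j, fac (α j) (β j) (u j) (v j) (a j) with hF
  -- expand C t as a sum over activity vectors
  have hCt : ∀ t : ℕ, C t = ∑ a : Fin n → Act,
      Complex.exp (-2 * (Real.pi : ℂ) * Complex.I * t / (n + 1)) ^ (busyP a) * ((F a : ℝ) : ℂ) := by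
    intro t
    set w : ℂ := Complex.exp (-2 * (Real.pi : ℂ) * Complex.I * t / (n + 1)) with hw
    have hfactor : ∀ j : Fin n,
        (1 + ((α j / β j : ℝ) : ℂ) + w * ((α j * u j / (β j * v j) : ℝ) : ℂ))
        = ∑ act : Act, w ^ (if act = Act.T then 1 else 0) *
            ((fac (α j) (β j) (u j) (v j) act : ℝ) : ℂ) := by
      intro j
      rw [act_sum]
      simp [fac]
    rw [hC]
    calc (∏ j, (1 + ((α j / β j : ℝ) : ℂ) + w * ((α j * u j / (β j * v j) : ℝ) : ℂ)))
        = ∏ j, ∑ act : Act, w ^ (if act = Act.T then 1 else 0) *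
            ((fac (α j) (β j) (u j) (v j) act : ℝ) : ℂ) := Finset.prod_congr rfl (fun j _ => hfactor j)
      _ = ∑ a ∈ Fintype.piFinset (fun _ : Fin n => (Finset.univ : Finset Act)),
            ∏ j, w ^ (if a j = Act.T then 1 else 0) *
              ((fac (α j) (β j) (u j) (v j) (a j) : ℝ) : ℂ) :=
          Finset.prod_univ_sum _ _
      _ = ∑ a : Fin n → Act, w ^ (busyP a) * ((F a : ℝ) : ℂ) := by
          rw [Fintype.piFinset_univ]
          apply Finset.sum_congr rfl
          intro a _
          rw [Finset.prod_mul_distrib, Finset.prod_pow_eq_pow_sum, ← busyP_eq_sum, hF]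
          push_cast
          ring
  -- now the inverse DFT
  have key : ∑ t ∈ Finset.range (n + 1),
      C t * Complex.exp (2 * (Real.pi : ℂ) * Complex.I * t * b / (n + 1))
      = ((n : ℂ) + 1) * (c b : ℂ) := by
    calc ∑ t ∈ Finset.range (n + 1),
        C t * Complex.exp (2 * (Real.pi : ℂ) * Complex.I * t * b / (n + 1))
        = ∑ t ∈ Finset.range (n + 1), ∑ a : Fin n → Act,
            ((F a : ℝ) : ℂ) * Complex.exp (2 * (Real.pi : ℂ) * Complex.I *
              ((b : ℂ) - (busyP a : ℂ)) * t / (n + 1)) := by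
          apply Finset.sum_congr rfl
          intro t _
          rw [hCt, Finset.sum_mul]
          apply Finset.sum_congr rfl
          intro a _
          rw [← Complex.exp_nat_mul, mul_right_comm, ← Complex.exp_add, mul_comm]
          congr 2
          field_simp
          ring
      _ = ∑ a : Fin n → Act, ((F a : ℝ) : ℂ) * ∑ t ∈ Finset.range (n + 1),
            Complex.exp (2 * (Real.pi : ℂ) * Complex.I *
              ((b : ℂ) - (busyP a : ℂ)) * t / (n + 1)) := by
          rw [Finset.sum_comm]
          simp_rw [Finset.mul_sum]
      _ = ∑ a : Fin n → Act, ((F a : ℝ) : ℂ) *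
            (if b = busyP a then ((n : ℂ) + 1) else 0) := by
          apply Finset.sum_congr rfl
          intro a _
          rw [root_sum_helper n b (busyP a) hb (busyP_le a)]
      _ = ∑ a : Fin n → Act, (if busyP a = b then ((F a : ℝ) : ℂ) * ((n : ℂ) + 1) else 0) := by
          apply Finset.sum_congr rfl
          intro a _
          by_cases h : busyP a = b
          · rw [if_pos h, if_pos h.symm]
          · rw [if_neg h, if_neg (fun hh => h hh.symm), mul_zero]
      _ = ∑ a ∈ Finset.univ.filter (fun a : Fin n → Act => busyP a = b),
            ((F a : ℝ) : ℂ) * ((n : ℂ) + 1) := (Finset.sum_filter _ _).symm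
      _ = ((n : ℂ) + 1) * (c b : ℂ) := by
          rw [hc, ← Finset.sum_mul, mul_comm]
          norm_cast
  rw [key]
  field_simp

lemma part2_helper (m k n : ℕ)
    (θ : ℕ → ℝ)
    (α β u v : Fin n → ℝ) (ρ : Fin k → ℝ)
    (B : ℝ) (hB : 0 < B)
    (p : (Fin k → ℕ) → (Fin n → Act) → ℝ)
    (hp : ∀ (x : Fin k → ℕ) (a : Fin n → Act),
      p x a = B * (∏ r ∈ Finset.range (∑ i, x i + busyP a), θ r) *
        (∏ i, ρ i ^ (x i) / (x i).factorial) *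
        ∏ j, fac (α j) (β j) (u j) (v j) (a j))
    (c : ℕ → ℝ)
    (hc : ∀ b, c b = ∑ a ∈ Finset.univ.filter (fun a : Fin n → Act => busyP a = b),
      ∏ j, fac (α j) (β j) (u j) (v j) (a j))
    (hsum : (∑ a : Fin n → Act, ∑ xt ∈ Finset.range (m + 1 - busyP a),
          ∑ x ∈ Finset.Nat.antidiagonalTuple k xt, p x a) = 1) :
    B = 1 / (∑ b ∈ Finset.range (min m n + 1), ∑ xt ∈ Finset.range (m - b + 1),
          (∑ i, ρ i) ^ xt / xt.factorial * (∏ r ∈ Finset.range (xt + b), θ r) * c b) := by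
  set F : (Fin n → Act) → ℝ := fun a => ∏ j, fac (α j) (β j) (u j) (v j) (a j) with hF
  set G : ℕ → ℝ := fun b => ∑ xt ∈ Finset.range (m + 1 - b),
    (∑ i, ρ i) ^ xt / xt.factorial * (∏ r ∈ Finset.range (xt + b), θ r) with hG
  -- step 1: collapse the inner double sum
  have hA : ∀ (a : Fin n → Act) (xt : ℕ),
      ∑ x ∈ Finset.Nat.antidiagonalTuple k xt, p x a
      = B * ((∑ i, ρ i) ^ xt / xt.factorial * (∏ r ∈ Finset.range (xt + busyP a), θ r)) * F a := by
    intro a xt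
    calc ∑ x ∈ Finset.Nat.antidiagonalTuple k xt, p x a
        = ∑ x ∈ Finset.Nat.antidiagonalTuple k xt,
            (B * (∏ r ∈ Finset.range (xt + busyP a), θ r) * F a) *
              (∏ i, ρ i ^ (x i) / (x i).factorial) := by
          apply Finset.sum_congr rfl
          intro x hx
          have hx' : ∑ i, x i = xt := Finset.Nat.mem_antidiagonalTuple.1 hx
          rw [hp, hx', hF]
          ring
      _ = (B * (∏ r ∈ Finset.range (xt + busyP a), θ r) * F a) *
            ((∑ i, ρ i) ^ xt / xt.factorial) := by
          rw [← Finset.mul_sum, multinomial_sum_helper]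
      _ = B * ((∑ i, ρ i) ^ xt / xt.factorial * (∏ r ∈ Finset.range (xt + busyP a), θ r)) * F a := by
          ring
  have hstep1 : (∑ a : Fin n → Act, ∑ xt ∈ Finset.range (m + 1 - busyP a),
      ∑ x ∈ Finset.Nat.antidiagonalTuple k xt, p x a)
      = B * ∑ a : Fin n → Act, F a * G (busyP a) := by
    rw [Finset.mul_sum]
    apply Finset.sum_congr rfl
    intro a _
    simp_rw [hA]
    rw [hG]
    simp only
    rw [Finset.mul_sum, Finset.mul_sum]
    apply Finset.sum_congr rfl
    intro xt _
    ring
  -- step 2: group by busy level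
  have hstep2 : (∑ a : Fin n → Act, F a * G (busyP a))
      = ∑ b ∈ Finset.range (n + 1), G b * c b := by
    rw [← Finset.sum_fiberwise_of_maps_to (g := fun a : Fin n → Act => busyP a)
      (t := Finset.range (n + 1)) (fun a _ => Finset.mem_range.2 (Nat.lt_succ_of_le (busyP_le a)))
      (fun a => F a * G (busyP a))]
    apply Finset.sum_congr rfl
    intro b _
    rw [hc]
    calc ∑ a ∈ Finset.univ.filter (fun a : Fin n → Act => busyP a = b), F a * G (busyP a)
        = ∑ a ∈ Finset.univ.filter (fun a : Fin n → Act => busyP a = b), F a * G b := by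
          apply Finset.sum_congr rfl
          intro a ha
          rw [(Finset.mem_filter.1 ha).2]
      _ = G b * ∑ a ∈ Finset.univ.filter (fun a : Fin n → Act => busyP a = b), F a := by
          rw [Finset.mul_sum]
          exact Finset.sum_congr rfl (fun a _ => by ring)
      _ = G b * ∑ a ∈ Finset.univ.filter (fun a : Fin n → Act => busyP a = b),
            ∏ j, fac (α j) (β j) (u j) (v j) (a j) := rfl
  -- step 3: restrict the range
  have hstep3 : (∑ b ∈ Finset.range (n + 1), G b * c b)
      = ∑ b ∈ Finset.range (min m n + 1), ∑ xt ∈ Finset.range (m - b + 1),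
          (∑ i, ρ i) ^ xt / xt.factorial * (∏ r ∈ Finset.range (xt + b), θ r) * c b := by
    rw [← Finset.sum_subset (Finset.range_subset_range.2 (by omega : min m n + 1 ≤ n + 1))
      (fun b hb hb' => ?_)]
    · apply Finset.sum_congr rfl
      intro b hb
      have hbm : b ≤ m := by
        have := Finset.mem_range.1 hb
        omega
      have : m + 1 - b = m - b + 1 := by omega
      rw [hG]
      simp only
      rw [this, Finset.sum_mul]
    · have h1 : ¬ b < min m n + 1 := fun h => hb' (Finset.mem_range.2 h)
      have h2 : b < n + 1 := Finset.mem_range.1 hb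
      have h3 : m + 1 - b = 0 := by omega
      have hG0 : G b = 0 := by
        rw [hG]
        simp only
        rw [h3]
        simp
      rw [hG0, zero_mul]
  -- conclude
  rw [hstep1, hstep2, hstep3] at hsum
  set S : ℝ := ∑ b ∈ Finset.range (min m n + 1), ∑ xt ∈ Finset.range (m - b + 1),
    (∑ i, ρ i) ^ xt / xt.factorial * (∏ r ∈ Finset.range (xt + b), θ r) * c b with hS
  have hSne : S ≠ 0 := by
    intro h
    rw [h, mul_zero] at hsum
    norm_num at hsum
  rw [eq_div_iff hSne]
  exact hsum

end Helpers

/-- the coefficients `c_b` are recovered from the DFT values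
`C_t = ∏_j [1 + α_j/β_j + e^{-2πit/(n+1)} α_j u_j/(β_j v_j)]` by the inverse discrete
Fourier transform; consequently, if the mass function sums to one over legitimate
states, the normalizing constant is `B = 1/(∑_{b=0}^g ∑_{x=0}^{m-b} (ρ^x/x!)
(∏_{r=0}^{x+b-1} θ(r)) c_b)` with `g = min m n`. -/
theorem inverse_dft_cb_and_normalizing_constant
    (m k n : ℕ) (hm : 0 < m) (hk : 0 < k) (hn : 0 < n)
    (θ : ℕ → ℝ)
    (hθ1 : ∀ b ≤ m, 0 ≤ θ b ∧ θ b ≤ 1)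
    (hθ2 : ∀ b < m, 0 < θ b)
    (hθ3 : θ m = 0)
    (lam μ : Fin k → ℝ) (hlam : ∀ i, 0 < lam i) (hμ : ∀ i, 0 < μ i)
    (α β u v : Fin n → ℝ)
    (hα : ∀ j, 0 < α j) (hβ : ∀ j, 0 < β j) (hu : ∀ j, 0 < u j) (hv : ∀ j, 0 < v j)
    (ρ : Fin k → ℝ) (hρ : ∀ i, ρ i = lam i / μ i)
    (B : ℝ) (hB : 0 < B)
    (p : (Fin k → ℕ) → (Fin n → Act) → ℝ)
    (hp : ∀ (x : Fin k → ℕ) (a : Fin n → Act),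
      p x a = B * (∏ r ∈ Finset.range (∑ i, x i + busyP a), θ r) *
        (∏ i, ρ i ^ (x i) / (x i).factorial) *
        ∏ j, fac (α j) (β j) (u j) (v j) (a j))
    (c : ℕ → ℝ)
    (hc : ∀ b, c b = ∑ a ∈ Finset.univ.filter (fun a : Fin n → Act => busyP a = b),
      ∏ j, fac (α j) (β j) (u j) (v j) (a j))
    (C : ℕ → ℂ)
    (hC : ∀ t, C t = ∏ j,
      (1 + ((α j / β j : ℝ) : ℂ) +
        Complex.exp (-2 * (Real.pi : ℂ) * Complex.I * t / (n + 1)) *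
          ((α j * u j / (β j * v j) : ℝ) : ℂ))) :
    (∀ b ≤ n, (c b : ℂ) = (1 / (n + 1)) * ∑ t ∈ Finset.range (n + 1),
        C t * Complex.exp (2 * (Real.pi : ℂ) * Complex.I * t * b / (n + 1))) ∧
      ((∑ a : Fin n → Act, ∑ xt ∈ Finset.range (m + 1 - busyP a),
          ∑ x ∈ Finset.Nat.antidiagonalTuple k xt, p x a) = 1 →
        B = 1 / (∑ b ∈ Finset.range (min m n + 1), ∑ xt ∈ Finset.range (m - b + 1),
          (∑ i, ρ i) ^ xt / xt.factorial * (∏ r ∈ Finset.range (xt + b), θ r) * c b)) := by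
  constructor
  · intro b hb
    exact part1_helper n α β u v c hc C hC b hb
  · intro h
    exact part2_helper m k n θ α β u v ρ B hB p hp c hc h
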